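/- A tree name v̄ ∈ N^n is fixed by the dendriform involution (v̄ = v̄†) if and only if there exists a unique tree name w̄ with v̄ = w̄ ∨ w̄†; consequently the set of involution-fixed tree names in N^{2n} is empty and the set in N^{2n+1} has cardinality equal to the Catalan number C(n). -/

import Mathlib

/-- Planar rooted binary trees. -/
inductive PB : Type
  | leaf : PB
  | node : PB → PB → PB
  deriving DecidableEq

namespace PB

/-- The name (vector encoding) of a planar binary tree. -/
def name : PB → List ℕ
  | leaf => []
  | node l r => name l ++ [1] ++ (name r).map (fun x => x + (name l).length + 1)

/-- Number of internal (trivalent) vertices. -/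
def nodes : PB → ℕ
  | leaf => 0
  | node l r => nodes l + nodes r + 1

/-- Mirror image of a tree. -/
def mirror : PB → PB
  | leaf => leaf
  | node l r => node (mirror r) (mirror l)

/-- Left subtree. -/
def left : PB → PB
  | leaf => leaf
  | node l _ => l

/-- Right subtree. -/
def right : PB → PB
  | leaf => leaf
  | node _ r => r

end PB

/-- Grafting on vectors: v ∨ w = (v, 1, w + (len v + 1)). -/
def graft (v w : List ℕ) : List ℕ := v ++ [1] ++ w.map (fun x => x + v.length + 1)

/-- A list is a tree name if it is the name of some planar binary tree. -/
def TreeName (v : List ℕ) : Prop := ∃ t : PB, PB.name t = v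

/-- Componentwise order on vectors (of the same length). -/
def vle (v w : List ℕ) : Prop := List.Forall₂ (· ≤ ·) v w

/-- Strict componentwise order. -/
def vlt (v w : List ℕ) : Prop := vle v w ∧ v ≠ w

/-- k ▷ w : shift all coordinates ≠ 1 by k, fix coordinates equal to 1. -/
def rsh (k : ℕ) (w : List ℕ) : List ℕ := w.map (fun x => if x = 1 then 1 else x + k)

/-- The over operation on tree names: v ↗ w = (v, len v ▷ w). -/
def overN (v w : List ℕ) : List ℕ := v ++ rsh v.length w

/-- The under operation on tree names: v ↖ w = (v, len v + w). -/
def under (v w : List ℕ) : List ℕ := v ++ w.map (fun x => x + v.length)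

/-- Componentwise interval of lists. -/
def listIcc : List ℕ → List ℕ → Finset (List ℕ)
  | a :: as, b :: bs => ((Finset.Icc a b) ×ˢ listIcc as bs).image fun p => p.1 :: p.2
  | _, _ => {[]}

open Classical in
/-- Componentwise interval of tree names. -/
noncomputable def treeIcc (a b : List ℕ) : Finset (List ℕ) :=
  (listIcc a b).filter TreeName

/-- Dendriform addition of tree names: all tree names t with v ↗ w ≤ t ≤ v ↖ w. -/
noncomputable def dplus (v w : List ℕ) : Finset (List ℕ) :=
  treeIcc (overN v w) (under v w)

open Classical in
/-- The tree with a given name. -/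
noncomputable def treeOf (v : List ℕ) : PB :=
  if h : ∃ t : PB, PB.name t = v then h.choose else PB.leaf

/-- The dendriform involution on tree names (mirror image of the tree). -/
noncomputable def dag (v : List ℕ) : List ℕ := PB.name (PB.mirror (treeOf v))

/-- The name of the left subtree of (the tree of) a name. -/
noncomputable def leftN (v : List ℕ) : List ℕ := PB.name (treeOf v).left

/-- The name of the right subtree of (the tree of) a name. -/
noncomputable def rightN (v : List ℕ) : List ℕ := PB.name (treeOf v).right

lemma one_le_mem_name : ∀ t : PB, ∀ x ∈ t.name, 1 ≤ x := by
  intro t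
  induction t with
  | leaf => simp [PB.name]
  | node l r ihl ihr =>
    intro x hx
    simp only [PB.name, List.mem_append, List.mem_map, List.mem_singleton] at hx
    rcases hx with (h | h) | ⟨y, hy, rfl⟩
    · exact ihl x h
    · omega
    · omega

lemma suffix_of_suffix_len_le {s₁ s₂ l : List ℕ} (h₁ : s₁ <:+ l) (h₂ : s₂ <:+ l)
    (h : s₁.length ≤ s₂.length) : s₁ <:+ s₂ := by
  obtain ⟨a, ha⟩ := h₁
  obtain ⟨b, hb⟩ := h₂
  have hab : b ++ s₂ = a ++ s₁ := hb.trans ha.symm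
  rcases List.append_eq_append_iff.mp hab with ⟨e, he1, he2⟩ | ⟨e, he1, he2⟩
  · exact ⟨e, he2.symm⟩
  · have : e.length = 0 := by
      have := congrArg List.length he2
      simp at this
      omega
    rw [List.length_eq_zero_iff] at this
    subst this
    simp at he2
    exact he2 ▸ ⟨[], by simp⟩

lemma name_len_not_lt {l r l' r' : PB}
    (h : (PB.node l r).name = (PB.node l' r').name) :
    ¬ l.name.length < l'.name.length := by
  intro hlt
  have hs₁ : ([1] ++ r'.name.map (fun x => x + l'.name.length + 1)) <:+ (PB.node l r).name := by
    rw [h]; exact ⟨l'.name, by simp [PB.name]⟩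
  have hs₂ : (r.name.map (fun x => x + l.name.length + 1)) <:+ (PB.node l r).name :=
    ⟨l.name ++ [1], by simp [PB.name]⟩
  have hlen : (PB.node l r).name.length = l.name.length + 1 + r.name.length := by
    simp [PB.name]; omega
  have hlen' : (PB.node l r).name.length = l'.name.length + 1 + r'.name.length := by
    rw [h]; simp [PB.name]; omega
  have hsub : ([1] ++ r'.name.map (fun x => x + l'.name.length + 1)) <:+
      (r.name.map (fun x => x + l.name.length + 1)) := by
    apply suffix_of_suffix_len_le hs₁ hs₂
    simp only [List.length_append, List.length_map, List.length_singleton]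
    omega
  have h1 : (1 : ℕ) ∈ r.name.map (fun x => x + l.name.length + 1) :=
    hsub.subset (by simp)
  simp only [List.mem_map] at h1
  obtain ⟨y, hmem, hy⟩ := h1
  have := one_le_mem_name r y hmem
  omega

lemma name_len_eq {l r l' r' : PB}
    (h : (PB.node l r).name = (PB.node l' r').name) :
    l.name.length = l'.name.length := by
  rcases Nat.lt_trichotomy l.name.length l'.name.length with h1 | h1 | h1
  · exact absurd h1 (name_len_not_lt h)
  · exact h1
  · exact absurd h1 (name_len_not_lt h.symm)

lemma name_inj : ∀ t s : PB, t.name = s.name → t = s := by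
  intro t
  induction t with
  | leaf =>
    intro s h
    cases s with
    | leaf => rfl
    | node l r =>
      exfalso
      have := congrArg List.length h
      simp [PB.name] at this
  | node l r ihl ihr =>
    intro s h
    cases s with
    | leaf =>
      exfalso
      have := congrArg List.length h
      simp [PB.name] at this
    | node l' r' =>
      have hlen := name_len_eq h
      simp only [PB.name] at h
      rw [List.append_assoc, List.append_assoc] at h
      obtain ⟨h1, h2⟩ := List.append_inj h hlen
      have h3 : r.name.map (fun x => x + l.name.length + 1)
          = r'.name.map (fun x => x + l'.name.length + 1) := by
        simpa using h2
      rw [← hlen] at h3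
      have h4 : r.name = r'.name := by
        have hinj : Function.Injective (fun x : ℕ => x + l.name.length + 1) := by
          intro a b hab; simpa using hab
        exact List.map_injective_iff.mpr hinj h3
      rw [ihl l' h1, ihr r' h4]

lemma treeOf_name (t : PB) : treeOf t.name = t := by
  have h : ∃ s : PB, PB.name s = t.name := ⟨t, rfl⟩
  rw [treeOf, dif_pos h]
  exact name_inj _ _ h.choose_spec

lemma dag_name (t : PB) : dag t.name = (t.mirror).name := by
  rw [dag, treeOf_name]

lemma mirror_mirror (t : PB) : t.mirror.mirror = t := by
  induction t with
  | leaf => rfl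
  | node l r ihl ihr => simp [PB.mirror, ihl, ihr]

lemma nodes_mirror (t : PB) : t.mirror.nodes = t.nodes := by
  induction t with
  | leaf => rfl
  | node l r ihl ihr => simp [PB.mirror, PB.nodes, ihl, ihr]; omega

lemma length_name (t : PB) : t.name.length = t.nodes := by
  induction t with
  | leaf => rfl
  | node l r ihl ihr => simp [PB.name, PB.nodes, ihl, ihr]; omega

lemma name_node (l r : PB) : (PB.node l r).name = graft l.name r.name := rfl

lemma name_eq_nil (t : PB) : t.name = [] ↔ t = PB.leaf := by
  cases t with
  | leaf => simp [PB.name]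
  | node l r =>
    simp only [PB.name]
    constructor
    · intro h
      have := congrArg List.length h
      simp at this
    · intro h; cases h

/-- self-mirror trees of positive degree split. -/
lemma mirror_fixed_iff (t : PB) (ht : t ≠ PB.leaf) :
    t.mirror = t ↔ ∃ s : PB, t = PB.node s s.mirror := by
  cases t with
  | leaf => exact absurd rfl ht
  | node l r =>
    constructor
    · intro h
      simp only [PB.mirror, PB.node.injEq] at h
      exact ⟨l, by rw [← h.1, mirror_mirror, ← h.2]⟩
    · rintro ⟨s, hs⟩
      simp only [PB.node.injEq] at hs
      rw [hs.1, hs.2]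
      simp [PB.mirror, mirror_mirror]

-- conversion to Tree Unit
def toT : PB → Tree Unit
  | PB.leaf => Tree.nil
  | PB.node l r => Tree.node () (toT l) (toT r)

def fromT : Tree Unit → PB
  | BinaryTree.nil => PB.leaf
  | BinaryTree.node _ l r => PB.node (fromT l) (fromT r)

lemma from_toT (t : PB) : fromT (toT t) = t := by
  induction t with
  | leaf => rfl
  | node l r ihl ihr => simp [toT, fromT, ihl, ihr]

lemma to_fromT (t : Tree Unit) : toT (fromT t) = t := by
  induction t with
  | nil => rfl
  | node u l r ihl ihr => simp [toT, fromT, ihl, ihr]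

lemma numNodes_toT (t : PB) : (toT t).numNodes = t.nodes := by
  induction t with
  | leaf => rfl
  | node l r ihl ihr => simp [toT, PB.nodes, Tree.numNodes, ihl, ihr]

/-- A tree name of positive degree is fixed by the dendriform involution iff it is
w ∨ w† for a unique tree name w; there are no fixed tree names of even positive
degree 2n, and the fixed tree names of degree 2n+1 are counted by the Catalan
number C(n). -/
theorem stmt14 (n : ℕ) :
    (∀ v : List ℕ, TreeName v → v ≠ [] →
      (dag v = v ↔ ∃! w : List ℕ, TreeName w ∧ v = graft w (dag w))) ∧
    (1 ≤ n → {v : List ℕ | TreeName v ∧ v.length = 2 * n ∧ dag v = v} = ∅) ∧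
    Nat.card {v : List ℕ // TreeName v ∧ v.length = 2 * n + 1 ∧ dag v = v} = catalan n := by
  refine ⟨?_, ?_, ?_⟩
  · rintro v ⟨t, rfl⟩ hne
    have htl : t ≠ PB.leaf := fun h => hne ((name_eq_nil t).mpr h)
    rw [dag_name]
    constructor
    · intro h
      have hm : t.mirror = t := name_inj _ _ h
      obtain ⟨s, hs⟩ := (mirror_fixed_iff t htl).mp hm
      refine ⟨s.name, ⟨⟨s, rfl⟩, ?_⟩, ?_⟩
      · rw [dag_name, ← name_node, ← hs]
      · rintro w ⟨⟨a, rfl⟩, hw⟩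
        rw [dag_name, ← name_node] at hw
        have : PB.node s s.mirror = PB.node a a.mirror := name_inj _ _ (by rw [← hs, hw])
        simp only [PB.node.injEq] at this
        rw [this.1]
    · rintro ⟨w, ⟨⟨a, rfl⟩, hw⟩, _⟩
      rw [dag_name, ← name_node] at hw
      have : t = PB.node a a.mirror := name_inj _ _ hw
      rw [this]
      simp [PB.mirror, mirror_mirror]
  · intro hn
    ext v
    simp only [Set.mem_setOf_eq, Set.mem_empty_iff_false, iff_false, not_and]
    rintro ⟨t, rfl⟩ hlen hdag
    rw [dag_name] at hdag
    have hm : t.mirror = t := name_inj _ _ hdag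
    have htl : t ≠ PB.leaf := by
      intro h
      rw [h] at hlen
      simp [PB.name] at hlen
      omega
    obtain ⟨s, hs⟩ := (mirror_fixed_iff t htl).mp hm
    rw [length_name, hs] at hlen
    simp [PB.nodes, nodes_mirror] at hlen
    omega
  · have e1 : {s : PB // s.nodes = n} ≃
        {v : List ℕ // TreeName v ∧ v.length = 2 * n + 1 ∧ dag v = v} := by
      refine Equiv.ofBijective
        (fun s => ⟨(PB.node s.1 s.1.mirror).name, ⟨_, rfl⟩, ?_, ?_⟩) ⟨?_, ?_⟩
      · rw [length_name]
        simp [PB.nodes, nodes_mirror, s.2]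
        omega
      · rw [dag_name]
        congr 1
        exact (mirror_fixed_iff _ (by intro h; cases h)).mpr ⟨s.1, rfl⟩
      · rintro ⟨a, ha⟩ ⟨b, hb⟩ hab
        simp only [Subtype.mk.injEq] at hab ⊢
        have := name_inj _ _ hab
        simp only [PB.node.injEq] at this
        exact this.1
      · rintro ⟨v, ⟨t, rfl⟩, hlen, hdag⟩
        rw [dag_name] at hdag
        have hm : t.mirror = t := name_inj _ _ hdag
        have htl : t ≠ PB.leaf := by
          intro h
          rw [h] at hlen
          simp [PB.name] at hlen
        obtain ⟨s, hs⟩ := (mirror_fixed_iff t htl).mp hm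
        have hsn : s.nodes = n := by
          rw [length_name, hs] at hlen
          simp [PB.nodes, nodes_mirror] at hlen
          omega
        exact ⟨⟨s, hsn⟩, by simp [← hs]⟩
    have e2 : {s : PB // s.nodes = n} ≃ {t : Tree Unit // t.numNodes = n} := by
      refine ⟨fun s => ⟨toT s.1, by rw [numNodes_toT]; exact s.2⟩,
        fun t => ⟨fromT t.1, by rw [← numNodes_toT, to_fromT]; exact t.2⟩, ?_, ?_⟩
      · intro s; simp [from_toT]
      · intro t; simp [to_fromT]
    have e3 : {t : Tree Unit // t.numNodes = n} ≃ (Tree.treesOfNumNodesEq n : Finset (Tree Unit)) :=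
      Equiv.subtypeEquivRight (fun t => by simp [BinaryTree.mem_treesOfNumNodesEq])
    rw [Nat.card_congr (e1.symm.trans (e2.trans e3)), Nat.card_eq_finsetCard,
      BinaryTree.treesOfNumNodesEq_card_eq_catalan]
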